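/- Over a commutative F₂-algebra R, the determinant of any alternating matrix (symmetric with zero diagonal) is a square in R. -/

import Mathlib

open Finset Equiv

lemma sq_sum_char2 {R : Type*} [CommRing R] (h2 : (2 : R) = 0) {ι : Type*}
    (s : Finset ι) (f : ι → R) : (∑ i ∈ s, f i) ^ 2 = ∑ i ∈ s, (f i) ^ 2 := by
  classical
  induction s using Finset.cons_induction with
  | empty => simp
  | cons a s ha ih =>
      rw [Finset.sum_cons, Finset.sum_cons, ← ih]
      have : (f a + ∑ i ∈ s, f i) ^ 2
          = f a ^ 2 + (∑ i ∈ s, f i) ^ 2 + 2 * (f a * ∑ i ∈ s, f i) := by ring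
      rw [this, h2, zero_mul, add_zero]

/-- Over a commutative `F₂`-algebra, the determinant of any alternating matrix
(symmetric with zero diagonal) is a square. -/
theorem stmt16 (R : Type*) [CommRing R] [Algebra (ZMod 2) R] (n : ℕ)
    (A : Matrix (Fin n) (Fin n) R) (hsym : A.transpose = A)
    (hdiag : ∀ i, A i i = 0) :
    ∃ r : R, A.det = r ^ 2 := by
  classical
  have h2 : (2 : R) = 0 := by
    have h := map_natCast (algebraMap (ZMod 2) R) 2
    have : ((2 : ℕ) : ZMod 2) = 0 := by decide
    rw [this, map_zero] at h
    simpa using h.symm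
  have hs : ∀ i j, A i j = A j i := fun i j => congrFun (congrFun hsym j) i
  set f : Perm (Fin n) → R := fun σ => ∏ i, A (σ i) i with hf
  -- f σ = f σ⁻¹
  have hfinv : ∀ σ : Perm (Fin n), f σ⁻¹ = f σ := by
    intro σ
    have := Equiv.prod_comp σ (fun i => A (σ⁻¹ i) i)
    simp only [show ∀ i, σ⁻¹ (σ i) = i from fun i => σ.symm_apply_apply i] at this
    rw [hf]
    dsimp only
    rw [← this]
    exact Finset.prod_congr rfl fun i _ => (hs _ _)
  -- determinant as a plain sum
  have hdet : A.det = ∑ σ : Perm (Fin n), f σ := by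
    rw [Matrix.det_apply]
    refine Finset.sum_congr rfl fun σ _ => ?_
    rcases Int.units_eq_one_or (Equiv.Perm.sign σ) with h | h
    · simp [h, hf]
    · have hneg : ∀ x : R, -x = x := by
        intro x
        have hx : x + x = 0 := by
          have : x + x = 2 * x := by ring
          rw [this, h2, zero_mul]
        linear_combination -hx
      simp [h, Units.smul_def, hneg, hf]
  set p : Perm (Fin n) → Prop := fun σ => σ * σ = 1 ∧ ∀ i, σ i ≠ i with hp
  have hsplit := Finset.sum_filter_add_sum_filter_not Finset.univ p f
  -- the non-involution / fixed-point part sums to zero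
  have hzero : ∑ σ ∈ Finset.univ.filter fun σ => ¬ p σ, f σ = 0 := by
    refine Finset.sum_involution (fun σ _ => σ⁻¹) ?_ ?_ ?_ ?_
    · intro σ _
      rw [hfinv]
      have : f σ + f σ = 2 * f σ := by ring
      rw [this, h2, zero_mul]
    · intro σ hσ hfσ
      simp only [Finset.mem_filter, Finset.mem_univ, true_and, hp] at hσ
      intro hcon
      have hcon' : σ⁻¹ = σ := hcon
      apply hσ
      constructor
      · nth_rewrite 1 [← hcon']
        exact inv_mul_cancel σ
      · intro i hi
        apply hfσ
        rw [hf]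
        exact Finset.prod_eq_zero (Finset.mem_univ i) (by rw [hi]; exact hdiag i)
    · intro σ hσ
      simp only [Finset.mem_filter, Finset.mem_univ, true_and, hp] at hσ ⊢
      intro hcon
      apply hσ
      obtain ⟨h1, hfp⟩ := hcon
      constructor
      · have := congrArg (·⁻¹) h1
        simpa [mul_inv_rev] using this
      · intro i hi
        exact hfp i (by simpa using (congrArg (fun x => σ⁻¹ x) hi).symm)
    · intro σ _; simp
  -- each remaining term is a square
  have hsq : ∀ σ ∈ Finset.univ.filter p, f σ =
      (∏ i ∈ Finset.univ.filter fun i => i < σ i, A (σ i) i) ^ 2 := by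
    intro σ hσ
    simp only [Finset.mem_filter, Finset.mem_univ, true_and, hp] at hσ
    obtain ⟨h1, hfp⟩ := hσ
    have hσσ : ∀ i, σ (σ i) = i := by
      intro i
      have := congrFun (congrArg (fun e : Perm (Fin n) => (e : Fin n → Fin n)) h1) i
      simpa using this
    have hunion : (Finset.univ : Finset (Fin n)) =
        (Finset.univ.filter fun i => i < σ i) ∪ (Finset.univ.filter fun i => σ i < i) := by
      ext i
      simp only [Finset.mem_univ, Finset.mem_union, Finset.mem_filter, true_and, true_iff]
      rcases lt_or_gt_of_ne (Ne.symm (hfp i)) with h | h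
      · exact Or.inl h
      · exact Or.inr h
    have hdisj : Disjoint (Finset.univ.filter fun i => i < σ i)
        (Finset.univ.filter fun i => σ i < i) := by
      rw [Finset.disjoint_filter]
      intro i _ h1i h2i
      exact absurd (h1i.trans h2i) (lt_irrefl i)
    have hprod2 : ∏ i ∈ Finset.univ.filter (fun i => σ i < i), A (σ i) i =
        ∏ i ∈ Finset.univ.filter (fun i => i < σ i), A (σ i) i := by
      refine Finset.prod_bij' (fun i _ => σ i) (fun i _ => σ i) ?_ ?_ ?_ ?_ ?_
      · intro i hi
        simp only [Finset.mem_filter, Finset.mem_univ, true_and] at hi ⊢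
        rw [hσσ]; exact hi
      · intro i hi
        simp only [Finset.mem_filter, Finset.mem_univ, true_and] at hi ⊢
        rw [hσσ]; exact hi
      · intro i _; exact hσσ i
      · intro i _; exact hσσ i
      · intro i _
        rw [hσσ]
        exact hs _ _
    rw [hf]
    dsimp only
    rw [sq]
    nth_rewrite 2 [← hprod2]
    rw [← Finset.prod_union hdisj, ← hunion]
  -- finish
  refine ⟨∑ σ ∈ Finset.univ.filter p, ∏ i ∈ Finset.univ.filter fun i => i < σ i, A (σ i) i, ?_⟩
  rw [hdet, ← hsplit, hzero, add_zero, sq_sum_char2 h2]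
  exact Finset.sum_congr rfl hsq
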